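/- Assume μ₁ + μ₂ > 0 and p(z,x) > 0 for all (z,x). Let q₁ be a strictly positive pmf on ℛ̂, q₂(·|r̂,x) strictly positive conditional pmfs on 𝒵, and q₃(·|z) strictly positive conditional pmfs on ℛ̂. Define w'(r̂|z,x) = (1/η(z,x))·[ q₁(r̂)^{μ₁} · q₂(z|r̂,x)^{μ₁} · q₃(r̂|z)^{μ₂} · 2^{−∑_r p(r|z,x) d(r̂,r)} ]^{1/(μ₁+μ₂)}, where η(z,x) is the normalizing constant making ∑_{r̂} w'(r̂|z,x) = 1. Then w' is a (strictly positive) channel and f(w'; q₁; q₂; q₃) ≤ f(w; q₁; q₂; q₃) for every channel w. -/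

import Mathlib

open Real Finset

noncomputable section

variable {𝒵 𝒳 ℛ ℛh : Type} [Fintype 𝒵] [Fintype 𝒳] [Fintype ℛ] [Fintype ℛh]

/-- Marginal `p(z,x)` of the fixed joint pmf `p(z,x,r)`. -/
def pZX (p : 𝒵 → 𝒳 → ℛ → ℝ) (z : 𝒵) (x : 𝒳) : ℝ := ∑ r, p z x r

/-- Marginal `p(x)`. -/
def pX (p : 𝒵 → 𝒳 → ℛ → ℝ) (x : 𝒳) : ℝ := ∑ z, ∑ r, p z x r

/-- Marginal `p(z)`. -/
def pZ (p : 𝒵 → 𝒳 → ℛ → ℝ) (z : 𝒵) : ℝ := ∑ x, ∑ r, p z x r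

/-- `p` is a probability mass function on `𝒵 × 𝒳 × ℛ`. -/
def IsPMF (p : 𝒵 → 𝒳 → ℛ → ℝ) : Prop :=
  (∀ z x r, 0 ≤ p z x r) ∧ ∑ z, ∑ x, ∑ r, p z x r = 1

/-- A channel `w(r̂|z,x)`: entries in `[0,1]` summing to `1` over `r̂` for each `(z,x)`. -/
def IsChannel (w : ℛh → 𝒵 → 𝒳 → ℝ) : Prop :=
  (∀ rh z x, 0 ≤ w rh z x ∧ w rh z x ≤ 1) ∧ (∀ z x, ∑ rh, w rh z x = 1)

/-- Induced joint pmf `q(r̂,z,x) = w(r̂|z,x) p(z,x)`. -/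
def qJ (p : 𝒵 → 𝒳 → ℛ → ℝ) (w : ℛh → 𝒵 → 𝒳 → ℝ) (rh : ℛh) (z : 𝒵) (x : 𝒳) : ℝ :=
  w rh z x * pZX p z x

/-- Induced marginal `q(r̂,x)`. -/
def qRhX (p : 𝒵 → 𝒳 → ℛ → ℝ) (w : ℛh → 𝒵 → 𝒳 → ℝ) (rh : ℛh) (x : 𝒳) : ℝ :=
  ∑ z, qJ p w rh z x

/-- Induced marginal `q(r̂)`. -/
def qRh (p : 𝒵 → 𝒳 → ℛ → ℝ) (w : ℛh → 𝒵 → 𝒳 → ℝ) (rh : ℛh) : ℝ :=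
  ∑ z, ∑ x, qJ p w rh z x

/-- Induced marginal `q(r̂,z)`. -/
def qRhZ (p : 𝒵 → 𝒳 → ℛ → ℝ) (w : ℛh → 𝒵 → 𝒳 → ℝ) (rh : ℛh) (z : 𝒵) : ℝ :=
  ∑ x, qJ p w rh z x

/-- Induced marginal `q(z)`. -/
def qZ (p : 𝒵 → 𝒳 → ℛ → ℝ) (w : ℛh → 𝒵 → 𝒳 → ℝ) (z : 𝒵) : ℝ :=
  ∑ rh, ∑ x, qJ p w rh z x

/-- Expected distortion `E_q[d(R̂,R)]` under `q(r̂,z,x,r) = w(r̂|z,x) p(z,x,r)`. -/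
def expDist (p : 𝒵 → 𝒳 → ℛ → ℝ) (w : ℛh → 𝒵 → 𝒳 → ℝ) (d : ℛh → ℛ → ℝ) : ℝ :=
  ∑ rh, ∑ z, ∑ x, ∑ r, w rh z x * p z x r * d rh r

/-- Mutual information `I(R̂;X)` of the induced joint pmf (base-2 logs, `0·log₂0 = 0`). -/
def IRhX (p : 𝒵 → 𝒳 → ℛ → ℝ) (w : ℛh → 𝒵 → 𝒳 → ℝ) : ℝ :=
  ∑ rh, ∑ x, qRhX p w rh x * logb 2 (qRhX p w rh x / (qRh p w rh * pX p x))

/-- Mutual information `I(R̂,Z;X)` of the induced joint pmf. -/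
def IRhZX (p : 𝒵 → 𝒳 → ℛ → ℝ) (w : ℛh → 𝒵 → 𝒳 → ℝ) : ℝ :=
  ∑ rh, ∑ z, ∑ x, qJ p w rh z x * logb 2 (qJ p w rh z x / (qRhZ p w rh z * pX p x))

/-- Mutual information `I(Z;X)` of the fixed pmf `p`. -/
def IZX (p : 𝒵 → 𝒳 → ℛ → ℝ) : ℝ :=
  ∑ z, ∑ x, pZX p z x * logb 2 (pZX p z x / (pZ p z * pX p x))

/-- Entropy `H(Z)` of the fixed pmf `p`. -/
def HZ (p : 𝒵 → 𝒳 → ℛ → ℝ) : ℝ := -∑ z, pZ p z * logb 2 (pZ p z)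

/-- The objective `g(w) = E_q[d] + μ₁ (I(R̂;X) − ε) + μ₂ (I(R̂,Z;X) − δ)`. -/
def gObj (p : 𝒵 → 𝒳 → ℛ → ℝ) (d : ℛh → ℛ → ℝ) (μ₁ μ₂ ε δ : ℝ)
    (w : ℛh → 𝒵 → 𝒳 → ℝ) : ℝ :=
  expDist p w d + μ₁ * (IRhX p w - ε) + μ₂ * (IRhZX p w - δ)

/-- The constant `θ = (μ₁+μ₂) I(Z;X) − μ₁ H(Z) − μ₁ ε − μ₂ δ`, computed from `p` alone. -/
def θconst (p : 𝒵 → 𝒳 → ℛ → ℝ) (μ₁ μ₂ ε δ : ℝ) : ℝ :=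
  (μ₁ + μ₂) * IZX p - μ₁ * HZ p - μ₁ * ε - μ₂ * δ

/-- The surrogate objective
`f(w; q₁; q₂; q₃) = ∑_{(r̂,z,x): p(z,x)>0} p(z,x) w(r̂|z,x) [∑_r p(r|z,x) d(r̂,r)
  + (μ₁+μ₂) log₂ w(r̂|z,x) − μ₁ log₂ q₁(r̂) − μ₁ log₂ q₂(z|r̂,x) − μ₂ log₂ q₃(r̂|z)] + θ`. -/
def fObj (p : 𝒵 → 𝒳 → ℛ → ℝ) (d : ℛh → ℛ → ℝ) (μ₁ μ₂ ε δ : ℝ)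
    (w : ℛh → 𝒵 → 𝒳 → ℝ) (q₁ : ℛh → ℝ) (q₂ : 𝒵 → ℛh → 𝒳 → ℝ) (q₃ : ℛh → 𝒵 → ℝ) : ℝ :=
  (∑ rh, ∑ z, ∑ x,
      if 0 < pZX p z x then
        pZX p z x * w rh z x *
          ((∑ r, (p z x r / pZX p z x) * d rh r)
            + (μ₁ + μ₂) * logb 2 (w rh z x)
            - μ₁ * logb 2 (q₁ rh) - μ₁ * logb 2 (q₂ z rh x) - μ₂ * logb 2 (q₃ rh z))
      else 0)
    + θconst p μ₁ μ₂ ε δ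

/-- `q₁` is a strictly positive pmf on `ℛ̂`. -/
def PosPMF1 (q₁ : ℛh → ℝ) : Prop := (∀ rh, 0 < q₁ rh) ∧ ∑ rh, q₁ rh = 1

/-- `q₂(·|r̂,x)` is, for each `(r̂,x)`, a strictly positive pmf on `𝒵`. -/
def PosPMF2 (q₂ : 𝒵 → ℛh → 𝒳 → ℝ) : Prop :=
  (∀ z rh x, 0 < q₂ z rh x) ∧ ∀ rh x, ∑ z, q₂ z rh x = 1

/-- `q₃(·|z)` is, for each `z`, a strictly positive pmf on `ℛ̂`. -/
def PosPMF3 (q₃ : ℛh → 𝒵 → ℝ) : Prop :=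
  (∀ rh z, 0 < q₃ rh z) ∧ ∀ z, ∑ rh, q₃ rh z = 1

/-- The Blahut–Arimoto kernel
`K(r̂,z,x) = [ q₁(r̂)^{μ₁} q₂(z|r̂,x)^{μ₁} q₃(r̂|z)^{μ₂} 2^{−∑_r p(r|z,x) d(r̂,r)} ]^{1/(μ₁+μ₂)}`. -/
def BAker (p : 𝒵 → 𝒳 → ℛ → ℝ) (d : ℛh → ℛ → ℝ) (μ₁ μ₂ : ℝ)
    (q₁ : ℛh → ℝ) (q₂ : 𝒵 → ℛh → 𝒳 → ℝ) (q₃ : ℛh → 𝒵 → ℝ)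
    (rh : ℛh) (z : 𝒵) (x : 𝒳) : ℝ :=
  (q₁ rh ^ μ₁ * q₂ z rh x ^ μ₁ * q₃ rh z ^ μ₂ *
      (2 : ℝ) ^ (-(∑ r, (p z x r / pZX p z x) * d rh r))) ^ (1 / (μ₁ + μ₂))

/-- The normalisation factor `η(z,x) = ∑_{r̂} K(r̂,z,x)`. -/
def BAeta (p : 𝒵 → 𝒳 → ℛ → ℝ) (d : ℛh → ℛ → ℝ) (μ₁ μ₂ : ℝ)
    (q₁ : ℛh → ℝ) (q₂ : 𝒵 → ℛh → 𝒳 → ℝ) (q₃ : ℛh → 𝒵 → ℝ) (z : 𝒵) (x : 𝒳) : ℝ :=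
  ∑ rh, BAker p d μ₁ μ₂ q₁ q₂ q₃ rh z x

/-- The Blahut–Arimoto update channel
`w'(r̂|z,x) = (1/η(z,x)) K(r̂,z,x)`. -/
def BAw (p : 𝒵 → 𝒳 → ℛ → ℝ) (d : ℛh → ℛ → ℝ) (μ₁ μ₂ : ℝ)
    (q₁ : ℛh → ℝ) (q₂ : 𝒵 → ℛh → 𝒳 → ℝ) (q₃ : ℛh → 𝒵 → ℝ)
    (rh : ℛh) (z : 𝒵) (x : 𝒳) : ℝ :=
  (1 / BAeta p d μ₁ μ₂ q₁ q₂ q₃ z x) * BAker p d μ₁ μ₂ q₁ q₂ q₃ rh z x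

/-- Gibbs' inequality (nonnegativity of KL divergence), natural-log version. -/
lemma gibbs_aux {ι : Type} [Fintype ι] (w w' : ι → ℝ)
    (hw : ∀ i, 0 ≤ w i) (hw1 : ∑ i, w i = 1)
    (hw' : ∀ i, 0 < w' i) (hw'1 : ∑ i, w' i ≤ 1) :
    0 ≤ ∑ i, w i * (Real.log (w i) - Real.log (w' i)) := by
  have key : ∀ i, w i * (Real.log (w' i) - Real.log (w i)) ≤ w' i - w i := by
    intro i
    rcases eq_or_lt_of_le (hw i) with h | h
    · simp [← h]
      exact (hw' i).le
    · have h1 : Real.log (w' i / w i) ≤ w' i / w i - 1 :=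
        Real.log_le_sub_one_of_pos (div_pos (hw' i) h)
      have h2 : Real.log (w' i / w i) = Real.log (w' i) - Real.log (w i) :=
        Real.log_div (hw' i).ne' h.ne'
      rw [h2] at h1
      have h3 := mul_le_mul_of_nonneg_left h1 (hw i)
      calc w i * (Real.log (w' i) - Real.log (w i)) ≤ w i * (w' i / w i - 1) := h3
        _ = w' i - w i := by field_simp
  have hsum : ∑ i, w i * (Real.log (w' i) - Real.log (w i)) ≤ 0 := by
    calc ∑ i, w i * (Real.log (w' i) - Real.log (w i)) ≤ ∑ i, (w' i - w i) :=
          Finset.sum_le_sum fun i _ => key i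
      _ = (∑ i, w' i) - ∑ i, w i := Finset.sum_sub_distrib _ _
      _ ≤ 0 := by rw [hw1]; linarith
  have hneg : ∑ i, w i * (Real.log (w i) - Real.log (w' i))
      = -∑ i, w i * (Real.log (w' i) - Real.log (w i)) := by
    rw [← Finset.sum_neg_distrib]
    exact Finset.sum_congr rfl fun i _ => by ring
  rw [hneg]; linarith

/-- Assume `μ₁ + μ₂ > 0` and `p(z,x) > 0` for all `(z,x)`.  For strictly
positive `q₁`, `q₂(·|r̂,x)`, `q₃(·|z)`, the Blahut–Arimoto update `w'` is a strictly
positive channel and minimises `f(·; q₁; q₂; q₃)` over all channels: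
`f(w'; q₁; q₂; q₃) ≤ f(w; q₁; q₂; q₃)` for every channel `w`. -/
theorem statement6
    (p : 𝒵 → 𝒳 → ℛ → ℝ) (hp : IsPMF p) (hpZX : ∀ z x, 0 < pZX p z x)
    (d : ℛh → ℛ → ℝ) (hd : ∀ rh r, 0 ≤ d rh r)
    (μ₁ μ₂ : ℝ) (hμ₁ : 0 ≤ μ₁) (hμ₂ : 0 ≤ μ₂) (hμ : 0 < μ₁ + μ₂) (ε δ : ℝ)
    (q₁ : ℛh → ℝ) (hq₁ : PosPMF1 q₁)
    (q₂ : 𝒵 → ℛh → 𝒳 → ℝ) (hq₂ : PosPMF2 q₂)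
    (q₃ : ℛh → 𝒵 → ℝ) (hq₃ : PosPMF3 q₃) :
    IsChannel (BAw p d μ₁ μ₂ q₁ q₂ q₃) ∧
    (∀ rh z x, 0 < BAw p d μ₁ μ₂ q₁ q₂ q₃ rh z x) ∧
    ∀ w : ℛh → 𝒵 → 𝒳 → ℝ, IsChannel w →
      fObj p d μ₁ μ₂ ε δ (BAw p d μ₁ μ₂ q₁ q₂ q₃) q₁ q₂ q₃ ≤
        fObj p d μ₁ μ₂ ε δ w q₁ q₂ q₃ := by
  set K := BAker p d μ₁ μ₂ q₁ q₂ q₃ with hKdef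
  set η := BAeta p d μ₁ μ₂ q₁ q₂ q₃ with hηdef
  set w' := BAw p d μ₁ μ₂ q₁ q₂ q₃ with hw'def
  have hμne : μ₁ + μ₂ ≠ 0 := hμ.ne'
  have hL2 : (0:ℝ) < Real.log 2 := Real.log_pos one_lt_two
  -- positivity of the kernel
  have hKpos : ∀ rh z x, 0 < K rh z x := by
    intro rh z x
    have h1 := hq₁.1 rh
    have h2 := hq₂.1 z rh x
    have h3 := hq₃.1 rh z
    rw [hKdef]; unfold BAker
    positivity
  have hNE : Nonempty ℛh := by
    by_contra h
    rw [not_nonempty_iff] at h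
    have h0 := hq₁.2
    rw [Finset.univ_eq_empty, Finset.sum_empty] at h0
    exact one_ne_zero h0.symm
  have hηpos : ∀ z x, 0 < η z x := by
    intro z x
    exact Finset.sum_pos (fun rh _ => hKpos rh z x) Finset.univ_nonempty
  have hw'pos : ∀ rh z x, 0 < w' rh z x := by
    intro rh z x
    rw [hw'def]; unfold BAw
    exact mul_pos (one_div_pos.mpr (hηpos z x)) (hKpos rh z x)
  have hw'sum : ∀ z x, ∑ rh, w' rh z x = 1 := by
    intro z x
    rw [hw'def]; unfold BAw
    rw [← Finset.mul_sum]
    exact one_div_mul_cancel (hηpos z x).ne'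
  have hchan : IsChannel w' := by
    refine ⟨fun rh z x => ⟨(hw'pos rh z x).le, ?_⟩, hw'sum⟩
    have := Finset.single_le_sum (f := fun rh => w' rh z x)
      (fun i _ => (hw'pos i z x).le) (Finset.mem_univ rh)
    rw [hw'sum z x] at this
    exact this
  refine ⟨hchan, hw'pos, ?_⟩
  intro w hw
  -- the bracket identity
  have hbracket : ∀ (rh : ℛh) (z : 𝒵) (x : 𝒳) (t : ℝ),
      (∑ r, (p z x r / pZX p z x) * d rh r)
        + (μ₁ + μ₂) * logb 2 t
        - μ₁ * logb 2 (q₁ rh) - μ₁ * logb 2 (q₂ z rh x) - μ₂ * logb 2 (q₃ rh z)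
      = (μ₁ + μ₂) * (logb 2 t - logb 2 (w' rh z x) - logb 2 (η z x)) := by
    intro rh z x t
    have h1 := hq₁.1 rh
    have h2 := hq₂.1 z rh x
    have h3 := hq₃.1 rh z
    set D := ∑ r, (p z x r / pZX p z x) * d rh r with hDdef
    have hlogK : Real.log (K rh z x)
        = (1 / (μ₁ + μ₂)) * (μ₁ * Real.log (q₁ rh) + μ₁ * Real.log (q₂ z rh x)
            + μ₂ * Real.log (q₃ rh z) + (-D) * Real.log 2) := by
      have hA : (0:ℝ) < q₁ rh ^ μ₁ * q₂ z rh x ^ μ₁ * q₃ rh z ^ μ₂ * (2:ℝ) ^ (-D) := by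
        positivity
      rw [hKdef]; unfold BAker
      rw [← hDdef]
      rw [Real.log_rpow hA, Real.log_mul (by positivity) (by positivity),
        Real.log_mul (by positivity) (by positivity),
        Real.log_mul (by positivity) (by positivity),
        Real.log_rpow h1, Real.log_rpow h2, Real.log_rpow h3, Real.log_rpow two_pos]
    have hlogw' : Real.log (w' rh z x) = Real.log (K rh z x) - Real.log (η z x) := by
      rw [hw'def]; unfold BAw
      rw [Real.log_mul (one_div_pos.mpr (hηpos z x)).ne' (hKpos rh z x).ne', one_div,
        Real.log_inv]
      ring
    simp only [Real.logb]
    rw [hlogw', hlogK]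
    field_simp
    ring
  -- per-(z,x) sum identity
  have hsumid : ∀ (z : 𝒵) (x : 𝒳) (v : ℛh → ℝ), (∑ rh, v rh = 1) →
      (∑ rh, pZX p z x * v rh *
        ((∑ r, (p z x r / pZX p z x) * d rh r)
          + (μ₁ + μ₂) * logb 2 (v rh)
          - μ₁ * logb 2 (q₁ rh) - μ₁ * logb 2 (q₂ z rh x) - μ₂ * logb 2 (q₃ rh z)))
      = pZX p z x * (μ₁ + μ₂) *
          ((∑ rh, v rh * (logb 2 (v rh) - logb 2 (w' rh z x))) - logb 2 (η z x)) := by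
    intro z x v hv1
    have hterm : ∀ rh : ℛh, pZX p z x * v rh *
        ((∑ r, (p z x r / pZX p z x) * d rh r)
          + (μ₁ + μ₂) * logb 2 (v rh)
          - μ₁ * logb 2 (q₁ rh) - μ₁ * logb 2 (q₂ z rh x) - μ₂ * logb 2 (q₃ rh z))
        = pZX p z x * (μ₁ + μ₂) *
            (v rh * (logb 2 (v rh) - logb 2 (w' rh z x)) - v rh * logb 2 (η z x)) := by
      intro rh
      rw [hbracket rh z x (v rh)]
      ring
    rw [Finset.sum_congr rfl fun rh _ => hterm rh, ← Finset.mul_sum,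
      Finset.sum_sub_distrib, ← Finset.sum_mul, hv1]
    ring
  -- Gibbs inequality in base-2 form
  have hG : ∀ (z : 𝒵) (x : 𝒳) (v : ℛh → ℝ), (∀ rh, 0 ≤ v rh) → (∑ rh, v rh = 1) →
      0 ≤ ∑ rh, v rh * (logb 2 (v rh) - logb 2 (w' rh z x)) := by
    intro z x v hv0 hv1
    have h0 := gibbs_aux v (fun rh => w' rh z x) hv0 hv1 (fun rh => hw'pos rh z x)
      (le_of_eq (hw'sum z x))
    have heq : ∑ rh, v rh * (logb 2 (v rh) - logb 2 (w' rh z x))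
        = (∑ rh, v rh * (Real.log (v rh) - Real.log (w' rh z x))) / Real.log 2 := by
      rw [Finset.sum_div]
      refine Finset.sum_congr rfl fun rh _ => ?_
      simp only [Real.logb]
      ring
    rw [heq]
    exact div_nonneg h0 hL2.le
  -- per-(z,x) inequality
  have hinner : ∀ (z : 𝒵) (x : 𝒳),
      (∑ rh, pZX p z x * w' rh z x *
        ((∑ r, (p z x r / pZX p z x) * d rh r)
          + (μ₁ + μ₂) * logb 2 (w' rh z x)
          - μ₁ * logb 2 (q₁ rh) - μ₁ * logb 2 (q₂ z rh x) - μ₂ * logb 2 (q₃ rh z)))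
      ≤ ∑ rh, pZX p z x * w rh z x *
        ((∑ r, (p z x r / pZX p z x) * d rh r)
          + (μ₁ + μ₂) * logb 2 (w rh z x)
          - μ₁ * logb 2 (q₁ rh) - μ₁ * logb 2 (q₂ z rh x) - μ₂ * logb 2 (q₃ rh z)) := by
    intro z x
    have e1 := hsumid z x (fun rh => w' rh z x) (hw'sum z x)
    have e2 := hsumid z x (fun rh => w rh z x) (hw.2 z x)
    rw [e1, e2]
    have hG0 : ∑ rh, w' rh z x * (logb 2 (w' rh z x) - logb 2 (w' rh z x)) = 0 := by
      simp
    rw [hG0]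
    have hGw := hG z x (fun rh => w rh z x) (fun rh => (hw.1 rh z x).1) (hw.2 z x)
    have hp0 : (0:ℝ) ≤ pZX p z x * (μ₁ + μ₂) := by
      exact mul_nonneg (hpZX z x).le hμ.le
    apply mul_le_mul_of_nonneg_left _ hp0
    linarith
  -- assemble
  unfold fObj
  apply add_le_add_left
  have hifs : ∀ (z : 𝒵) (x : 𝒳) (A : ℝ), (if 0 < pZX p z x then A else 0) = A :=
    fun z x A => if_pos (hpZX z x)
  simp only [hifs]
  have hre : ∀ (u : ℛh → 𝒵 → 𝒳 → ℝ),
      (∑ rh, ∑ z, ∑ x, pZX p z x * u rh z x *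
        ((∑ r, (p z x r / pZX p z x) * d rh r)
          + (μ₁ + μ₂) * logb 2 (u rh z x)
          - μ₁ * logb 2 (q₁ rh) - μ₁ * logb 2 (q₂ z rh x) - μ₂ * logb 2 (q₃ rh z)))
      = ∑ z, ∑ x, ∑ rh, pZX p z x * u rh z x *
        ((∑ r, (p z x r / pZX p z x) * d rh r)
          + (μ₁ + μ₂) * logb 2 (u rh z x)
          - μ₁ * logb 2 (q₁ rh) - μ₁ * logb 2 (q₂ z rh x) - μ₂ * logb 2 (q₃ rh z)) := by
    intro u
    rw [Finset.sum_comm]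
    exact Finset.sum_congr rfl fun z _ => Finset.sum_comm
  rw [hre, hre]
  exact Finset.sum_le_sum fun z _ => Finset.sum_le_sum fun x _ => hinner z x

end
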